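/- Let H be a real Hilbert space and let {T_i}_{i=1}^m be a finite family of strongly nonexpansive operators on H with ∩_{i=1}^m Fix(T_i) ≠ ∅. Let M be a positive integer and let h : ℕ → {1,…,m} be an M-quasi-periodic surjection. Then for every x ∈ H, the sequence (P_n x), where P_n := T_{h(n)}∘⋯∘T_{h(0)} is the unrestricted product of {T_i}_{i=1}^m determined by h, converges weakly to a common fixed point of the operators {T_i}_{i=1}^m. -/

import Mathlib

open Filter Topology RealInnerProductSpace

variable {H : Type*} [NormedAddCommGroup H] [InnerProductSpace ℝ H] [CompleteSpace H]

/-- Weak convergence in a Hilbert space: `x n ⇀ p`. -/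
def WeakConvergesTo (x : ℕ → H) (p : H) : Prop :=
  ∀ y : H, Tendsto (fun n => ⟪x n, y⟫) atTop (𝓝 ⟪p, y⟫)

/-- `compSeq n g = g (n-1) ∘ ⋯ ∘ g 0` (the identity when `n = 0`). -/
def compSeq {α : Type*} : ℕ → (ℕ → α → α) → (α → α)
  | 0, _ => id
  | n + 1, g => g n ∘ compSeq n g

/-- `P` is the metric projection onto `C`. -/
def IsProjOn (C : Set H) (P : H → H) : Prop :=
  ∀ x, P x ∈ C ∧ ∀ y ∈ C, ‖x - P x‖ ≤ ‖x - y‖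

/-- Nonexpansive operator. -/
def Nonexpansive (T : H → H) : Prop := ∀ x y, ‖T x - T y‖ ≤ ‖x - y‖

/-- Condition (S). -/
def CondS (T : H → H) : Prop :=
  ∀ x y : ℕ → H, (∃ c, ∀ n, ‖x n - y n‖ ≤ c) →
    Tendsto (fun n => ‖x n - y n‖ - ‖T (x n) - T (y n)‖) atTop (𝓝 0) →
    Tendsto (fun n => x n - y n - (T (x n) - T (y n))) atTop (𝓝 (0 : H))

/-- Strongly nonexpansive operator. -/
def StronglyNonexpansive (T : H → H) : Prop := Nonexpansive T ∧ CondS T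

/-- Firmly nonexpansive operator. -/
def FirmlyNonexpansive (T : H → H) : Prop :=
  ∀ x y, ‖T x - T y‖ ^ 2 ≤ ⟪T x - T y, x - y⟫

/-- Averaged operator. -/
def Averaged (T : H → H) : Prop :=
  ∃ lam ∈ Set.Ioo (0 : ℝ) 1, ∃ U : H → H, Nonexpansive U ∧
    T = fun x => (1 - lam) • x + lam • U x

/-- The unrestricted `r`-set Douglas–Rachford operators `S n` associated with projections
`proj i` onto the sets `C i`, indices chosen by `f`: `S n = 2⁻¹ (Id + R_{C_{f((r-1)n+r-1)}} ∘ ⋯ ∘ R_{C_{f((r-1)n)}})`. -/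
noncomputable def drS (proj : ℕ → H → H) (r : ℕ) (f : ℕ → ℕ) (n : ℕ) : H → H :=
  fun x => (2⁻¹ : ℝ) • (x + compSeq r (fun j y => (2 : ℝ) • proj (f ((r - 1) * n + j)) y - y) x)

set_option linter.unusedSectionVars false in
/-- Weak sequential compactness of bounded sequences in a Hilbert space. -/
lemma exists_weak_subseq (b : ℕ → H) (C : ℝ) (hb : ∀ n, ‖b n‖ ≤ C) :
    ∃ (φ : ℕ → ℕ) (p : H), StrictMono φ ∧
      ∀ y : H, Tendsto (fun k => ⟪b (φ k), y⟫) atTop (𝓝 ⟪p, y⟫) := by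
  have hC0 : 0 ≤ C := le_trans (norm_nonneg (b 0)) (hb 0)
  -- diagonal extraction via seq compactness of product of intervals
  set S : Set (ℕ → ℝ) := Set.pi Set.univ (fun _ => Set.Icc (-(C*C)) (C*C)) with hS
  have hSc : IsSeqCompact S := (isCompact_univ_pi (fun _ => isCompact_Icc)).isSeqCompact
  have hmem : ∀ k, (fun j => ⟪b k, b j⟫) ∈ S := by
    intro k j _
    have := abs_real_inner_le_norm (b k) (b j)
    have hle : |⟪b k, b j⟫| ≤ C * C :=
      this.trans (mul_le_mul (hb k) (hb j) (norm_nonneg _) hC0)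
    exact abs_le.mp hle
  obtain ⟨L, _, φ, hφ, hL⟩ := hSc hmem
  have hLpt : ∀ j, Tendsto (fun k => ⟪b (φ k), b j⟫) atTop (𝓝 (L j)) := by
    intro j
    exact (tendsto_pi_nhds.mp hL) j
  -- the set of y for which the inner products converge
  set Yset : Set H := {y : H | ∃ r : ℝ, Tendsto (fun k => ⟪b (φ k), y⟫) atTop (𝓝 r)} with hYdef
  have hYrange : Set.range b ⊆ Yset := by
    rintro _ ⟨j, rfl⟩; exact ⟨L j, hLpt j⟩
  have hYspan : (Submodule.span ℝ (Set.range b) : Set H) ⊆ Yset := by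
    intro y hy
    induction hy using Submodule.span_induction with
    | mem z hz => exact hYrange hz
    | zero => exact ⟨0, by simp⟩
    | add u v _ _ hu hv =>
      obtain ⟨r, hr⟩ := hu; obtain ⟨s, hs⟩ := hv
      exact ⟨r + s, by simpa [inner_add_right] using hr.add hs⟩
    | smul c u _ hu =>
      obtain ⟨r, hr⟩ := hu
      exact ⟨c * r, by simpa [real_inner_smul_right] using hr.const_mul c⟩
  have hYclosed : IsClosed Yset := by
    refine isClosed_of_closure_subset ?_
    intro y hy
    have hcauchy : CauchySeq (fun k => ⟪b (φ k), y⟫) := by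
      rw [Metric.cauchySeq_iff]
      intro ε hε
      obtain ⟨y', hy', hdy⟩ := Metric.mem_closure_iff.mp hy (ε / 4 / (C + 1))
        (by positivity)
      obtain ⟨r, hr⟩ := hy'
      have hc' : CauchySeq (fun k => ⟪b (φ k), y'⟫) := hr.cauchySeq
      obtain ⟨N, hN⟩ := Metric.cauchySeq_iff.mp hc' (ε / 2) (by positivity)
      refine ⟨N, fun k hk l hl => ?_⟩
      have key : ∀ n : ℕ, |⟪b (φ n), y⟫ - ⟪b (φ n), y'⟫| ≤ ε / 4 := by
        intro n
        have : ⟪b (φ n), y⟫ - ⟪b (φ n), y'⟫ = ⟪b (φ n), y - y'⟫ := by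
          rw [inner_sub_right]
        rw [this]
        have h1 := abs_real_inner_le_norm (b (φ n)) (y - y')
        have h2 : ‖b (φ n)‖ * ‖y - y'‖ ≤ C * (ε / 4 / (C + 1)) := by
          apply mul_le_mul (hb _) _ (norm_nonneg _) hC0
          rw [← dist_eq_norm]; exact hdy.le
        have h3 : C * (ε / 4 / (C + 1)) ≤ ε / 4 := by
          rw [mul_div_assoc']
          rw [div_le_iff₀ (by positivity)]
          nlinarith
        linarith
      have := hN k hk l hl
      rw [Real.dist_eq] at this ⊢
      have e1 := key k; have e2 := key l
      have : |⟪b (φ k), y⟫ - ⟪b (φ l), y⟫| ≤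
          |⟪b (φ k), y⟫ - ⟪b (φ k), y'⟫| + |⟪b (φ k), y'⟫ - ⟪b (φ l), y'⟫|
            + |⟪b (φ l), y'⟫ - ⟪b (φ l), y⟫| := by
        have := abs_sub_le (⟪b (φ k), y⟫) (⟪b (φ k), y'⟫) (⟪b (φ l), y⟫)
        have := abs_sub_le (⟪b (φ k), y'⟫) (⟪b (φ l), y'⟫) (⟪b (φ l), y⟫)
        linarith [abs_sub_le (⟪b (φ k), y⟫) (⟪b (φ k), y'⟫) (⟪b (φ l), y⟫),
          abs_sub_le (⟪b (φ k), y'⟫) (⟪b (φ l), y'⟫) (⟪b (φ l), y⟫)]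
      have e3 : |⟪b (φ l), y'⟫ - ⟪b (φ l), y⟫| ≤ ε / 4 := by
        rw [abs_sub_comm]; exact key l
      linarith [hN k hk l hl, key k]
    obtain ⟨r, hr⟩ := cauchySeq_tendsto_of_complete hcauchy
    exact ⟨r, hr⟩
  -- every y has convergent inner products
  set K : Submodule ℝ H := (Submodule.span ℝ (Set.range b)).topologicalClosure with hK
  haveI : CompleteSpace K :=
    (Submodule.isClosed_topologicalClosure _).completeSpace_coe
  have hKY : (K : Set H) ⊆ Yset := by
    rw [hK, Submodule.topologicalClosure_coe]
    exact closure_minimal hYspan hYclosed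
  have hbK : ∀ n, b n ∈ K := fun n =>
    Submodule.le_topologicalClosure _ (Submodule.subset_span ⟨n, rfl⟩)
  have hconv : ∀ y : H, ∃ r : ℝ, Tendsto (fun k => ⟪b (φ k), y⟫) atTop (𝓝 r) := by
    intro y
    have hdecomp : ∀ n, ⟪b n, y⟫ = ⟪b n, (K.orthogonalProjectionOnto y : H)⟫ := by
      intro n
      have horth : y - (K.orthogonalProjectionOnto y : H) ∈ Kᗮ :=
        K.sub_starProjection_mem_orthogonal y
      have : ⟪b n, y - (K.orthogonalProjectionOnto y : H)⟫ = 0 :=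
        horth (b n) (hbK n)
      rw [inner_sub_right] at this
      linarith
    obtain ⟨r, hr⟩ := hKY (K.orthogonalProjectionOnto y).2
    exact ⟨r, by simpa only [← hdecomp] using hr⟩
  -- build the weak limit via Riesz
  set g : H → ℝ := fun y => (hconv y).choose with hg
  have hgt : ∀ y, Tendsto (fun k => ⟪b (φ k), y⟫) atTop (𝓝 (g y)) :=
    fun y => (hconv y).choose_spec
  have hadd : ∀ u v, g (u + v) = g u + g v := by
    intro u v
    refine tendsto_nhds_unique (hgt (u + v)) ?_
    simpa [inner_add_right] using (hgt u).add (hgt v)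
  have hsmul : ∀ (c : ℝ) u, g (c • u) = c * g u := by
    intro c u
    refine tendsto_nhds_unique (hgt (c • u)) ?_
    simpa [real_inner_smul_right] using (hgt u).const_mul c
  have hbound : ∀ y, ‖g y‖ ≤ C * ‖y‖ := by
    intro y
    have habs : Tendsto (fun k => |⟪b (φ k), y⟫|) atTop (𝓝 |g y|) := (hgt y).abs
    have : |g y| ≤ C * ‖y‖ := by
      refine le_of_tendsto habs (Eventually.of_forall fun k => ?_)
      exact (abs_real_inner_le_norm _ _).trans
        (mul_le_mul_of_nonneg_right (hb _) (norm_nonneg _))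
    simpa [Real.norm_eq_abs] using this
  set G : H →L[ℝ] ℝ := LinearMap.mkContinuous
    { toFun := g, map_add' := hadd, map_smul' := hsmul } C hbound with hG
  refine ⟨φ, (InnerProductSpace.toDual ℝ H).symm G, hφ, fun y => ?_⟩
  have : ⟪(InnerProductSpace.toDual ℝ H).symm G, y⟫ = G y :=
    InnerProductSpace.toDual_symm_apply
  rw [this]
  exact hgt y


set_option linter.unusedSectionVars false in
/-- Demiclosedness principle for nonexpansive maps. -/
lemma demiclosed (T : H → H) (hT : Nonexpansive T) (u : ℕ → H) (p : H) (D : ℝ)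
    (hbd : ∀ k, ‖u k - p‖ ≤ D)
    (hw : ∀ y : H, Tendsto (fun k => ⟪u k, y⟫) atTop (𝓝 ⟪p, y⟫))
    (hs : Tendsto (fun k => u k - T (u k)) atTop (𝓝 0)) : T p = p := by
  have hD0 : 0 ≤ D := le_trans (norm_nonneg _) (hbd 0)
  set ε : ℕ → ℝ := fun k => ‖u k - T (u k)‖ with hε
  have hε0 : Tendsto ε atTop (𝓝 0) := by
    simpa using hs.norm
  have hεnn : ∀ k, 0 ≤ ε k := fun k => norm_nonneg _
  -- ‖u k - T p‖ ≤ ε k + ‖u k - p‖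
  have htri : ∀ k, ‖u k - T p‖ ≤ ε k + ‖u k - p‖ := by
    intro k
    calc ‖u k - T p‖ ≤ ‖u k - T (u k)‖ + ‖T (u k) - T p‖ := by
          simpa using norm_sub_le_norm_sub_add_norm_sub (u k) (T (u k)) (T p)
      _ ≤ ε k + ‖u k - p‖ := add_le_add le_rfl (hT _ _)
  -- expansion
  have hexp : ∀ k, ‖u k - T p‖ ^ 2
      = ‖u k - p‖ ^ 2 + 2 * ⟪u k - p, p - T p⟫ + ‖p - T p‖ ^ 2 := by
    intro k
    have : u k - T p = (u k - p) + (p - T p) := by abel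
    rw [this, norm_add_sq_real]
  have hkey : ∀ k, ‖p - T p‖ ^ 2 ≤ ε k ^ 2 + 2 * ε k * D - 2 * ⟪u k - p, p - T p⟫ := by
    intro k
    have h1 : ‖u k - T p‖ ^ 2 ≤ (ε k + ‖u k - p‖) ^ 2 :=
      pow_le_pow_left₀ (norm_nonneg _) (htri k) 2
    have h2 := hexp k
    have h3 : (ε k + ‖u k - p‖) ^ 2 = ε k ^2 + 2 * ε k * ‖u k - p‖ + ‖u k - p‖ ^ 2 := by ring
    nlinarith [hbd k, hεnn k]
  -- RHS tends to 0
  have hip : Tendsto (fun k => ⟪u k - p, p - T p⟫) atTop (𝓝 0) := by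
    have := (hw (p - T p)).sub_const ⟪p, p - T p⟫
    simp only [sub_self] at this
    convert this using 2 with k
    rw [inner_sub_left]
  have hprod : Tendsto (fun k => ε k ^ 2 + 2 * ε k * D - 2 * ⟪u k - p, p - T p⟫)
      atTop (𝓝 0) := by
    have h1 : Tendsto (fun k => ε k ^ 2) atTop (𝓝 0) := by
      simpa using (hε0.pow 2)
    have h2 : Tendsto (fun k => 2 * ε k * D) atTop (𝓝 0) := by
      have := (hε0.const_mul 2).mul_const D
      simpa using this
    have := (h1.add h2).sub (hip.const_mul 2)
    simpa [mul_comm] using this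
  have hle : ‖p - T p‖ ^ 2 ≤ 0 := ge_of_tendsto hprod (Eventually.of_forall hkey)
  have : ‖p - T p‖ = 0 := by nlinarith [norm_nonneg (p - T p), sq_nonneg (‖p - T p‖)]
  have := norm_sub_eq_zero_iff.mp this
  exact this.symm


set_option linter.unusedVariables false in
set_option linter.unusedSectionVars false in
/-- Theorem 2.14: the unrestricted product of finitely many strongly nonexpansive
operators determined by an M-quasi-periodic mapping converges weakly to a common fixed point. -/
theorem stmt6
    (m M : ℕ) (hM : 0 < M)
    (T : ℕ → H → H) (hT : ∀ i ∈ Set.Icc 1 m, StronglyNonexpansive (T i))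
    (hfix : ∃ z : H, ∀ i ∈ Set.Icc 1 m, T i z = z)
    (h : ℕ → ℕ) (hh : Set.range h = Set.Icc 1 m)
    (hqp : ∀ n : ℕ, h '' Set.Ico n (n + M) = Set.range h)
    (x : H) :
    ∃ p, (∀ i ∈ Set.Icc 1 m, T i p = p) ∧
      WeakConvergesTo (fun n => compSeq (n + 1) (fun i => T (h i)) x) p := by
  obtain ⟨z0, hz0⟩ := hfix
  set seq : ℕ → H := fun n => compSeq (n + 1) (fun i => T (h i)) x with hseq
  have hsucc : ∀ n, seq (n + 1) = T (h (n + 1)) (seq n) := fun n => rfl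
  have hrange : ∀ n, h n ∈ Set.Icc 1 m := by
    intro n; rw [← hh]; exact ⟨n, rfl⟩
  -- Fejér monotonicity
  have anti : ∀ z : H, (∀ i ∈ Set.Icc 1 m, T i z = z) →
      Antitone (fun n => ‖seq n - z‖) := by
    intro z hz
    apply antitone_nat_of_succ_le
    intro n
    have : seq (n + 1) - z = T (h (n+1)) (seq n) - T (h (n+1)) z := by
      rw [hsucc, hz _ (hrange (n+1))]
    rw [this]
    exact (hT _ (hrange (n+1))).1 _ _
  have hlim : ∀ z : H, (∀ i ∈ Set.Icc 1 m, T i z = z) →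
      ∃ L : ℝ, Tendsto (fun n => ‖seq n - z‖) atTop (𝓝 L) := by
    intro z hz
    refine ⟨_, tendsto_atTop_ciInf (anti z hz) ⟨0, ?_⟩⟩
    rintro _ ⟨n, rfl⟩; exact norm_nonneg _
  -- uniform bound
  set C : ℝ := ‖seq 0 - z0‖ + ‖z0‖ with hCdef
  have hC : ∀ n, ‖seq n‖ ≤ C := by
    intro n
    calc ‖seq n‖ ≤ ‖seq n - z0‖ + ‖z0‖ := by
          simpa using norm_add_le (seq n - z0) z0
      _ ≤ ‖seq 0 - z0‖ + ‖z0‖ := by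
          have := anti z0 hz0 (Nat.zero_le n); linarith
  -- asymptotic regularity
  obtain ⟨L0, hL0⟩ := hlim z0 hz0
  have hdiffL : Tendsto (fun n => ‖seq n - z0‖ - ‖seq (n+1) - z0‖) atTop (𝓝 0) := by
    have h2 : Tendsto (fun n => ‖seq (n+1) - z0‖) atTop (𝓝 L0) :=
      hL0.comp (tendsto_add_atTop_nat 1)
    simpa using hL0.sub h2
  have hwall : ∀ i : ℕ, ∃ w : ℕ → H, i ∈ Set.Icc 1 m →
      (Tendsto w atTop (𝓝 0) ∧ ∀ n, h (n+1) = i → w n = seq n - seq (n+1)) := by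
    intro i
    by_cases hi : i ∈ Set.Icc 1 m
    · set u : ℕ → H := fun n => if h (n+1) = i then seq n else z0 with hu
      have hfixz : T i z0 = z0 := hz0 i hi
      have hbound : ∀ n, ‖u n - z0‖ ≤ ‖seq 0 - z0‖ := by
        intro n
        by_cases hc : h (n+1) = i
        · simp only [hu, if_pos hc]
          exact anti z0 hz0 (Nat.zero_le n)
        · simp [hu, if_neg hc]
      have hmid : Tendsto (fun n => ‖u n - z0‖ - ‖T i (u n) - T i z0‖) atTop (𝓝 0) := by
        apply tendsto_of_tendsto_of_tendsto_of_le_of_le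
          (tendsto_const_nhds (x := (0:ℝ))) hdiffL
        · intro n
          show (0:ℝ) ≤ ‖u n - z0‖ - ‖T i (u n) - T i z0‖
          have := (hT i hi).1 (u n) z0
          linarith
        · intro n
          by_cases hc : h (n+1) = i
          · simp only [hu, if_pos hc]
            rw [hfixz, ← hc, ← hsucc n]
          · show ‖u n - z0‖ - ‖T i (u n) - T i z0‖ ≤ ‖seq n - z0‖ - ‖seq (n+1) - z0‖
            simp only [hu, if_neg hc]
            simp only [sub_self, norm_zero]
            have := anti z0 hz0 (Nat.le_succ n)
            linarith
      have hconds := (hT i hi).2 u (fun _ => z0) ⟨‖seq 0 - z0‖, hbound⟩ hmid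
      refine ⟨fun n => u n - z0 - (T i (u n) - T i z0), fun _ => ⟨hconds, ?_⟩⟩
      intro n hc
      have hTs : T i (seq n) = seq (n + 1) := by rw [hsucc, hc]
      simp only [hu, if_pos hc, hfixz, hTs]
      abel
    · exact ⟨0, fun hcon => absurd hcon hi⟩
  choose W hW using hwall
  have hdiffnorm : Tendsto (fun n => ‖seq n - seq (n+1)‖) atTop (𝓝 0) := by
    have hsum : Tendsto (fun n => ∑ i ∈ Finset.Icc 1 m, ‖W i n‖) atTop (𝓝 0) := by
      have : Tendsto (fun n => ∑ i ∈ Finset.Icc 1 m, ‖W i n‖) atTop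
          (𝓝 (∑ i ∈ Finset.Icc 1 m, 0)) := by
        apply tendsto_finset_sum
        intro i hi
        have hi' : i ∈ Set.Icc 1 m := by simpa using Finset.mem_Icc.mp hi
        simpa using ((hW i hi').1).norm
      simpa using this
    apply squeeze_zero (fun n => norm_nonneg _) _ hsum
    intro n
    have hmem : h (n+1) ∈ Finset.Icc 1 m := by
      have := hrange (n+1); simpa [Finset.mem_Icc] using this
    have heq : ‖seq n - seq (n+1)‖ = ‖W (h (n+1)) n‖ := by
      rw [(hW (h (n+1)) (hrange (n+1))).2 n rfl]
    rw [heq]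
    exact Finset.single_le_sum (fun i _ => norm_nonneg (W i n)) hmem
  have hdiffvec : Tendsto (fun n => seq n - seq (n+1)) atTop (𝓝 0) :=
    tendsto_zero_iff_norm_tendsto_zero.mpr hdiffnorm
  -- telescoping bound
  have htel : ∀ n d : ℕ, ‖seq (n + d) - seq n‖ ≤
      ∑ t ∈ Finset.range d, ‖seq (n + t) - seq (n + t + 1)‖ := by
    intro n d
    induction d with
    | zero => simp
    | succ d ih =>
      rw [Finset.sum_range_succ]
      calc ‖seq (n + (d+1)) - seq n‖
          ≤ ‖seq (n + d) - seq n‖ + ‖seq (n + d) - seq (n + d + 1)‖ := by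
            have : seq (n + (d+1)) - seq n
                = (seq (n + d) - seq n) - (seq (n + d) - seq (n + d + 1)) := by
              have : n + (d + 1) = n + d + 1 := by ring
              rw [this]; abel
            rw [this]
            exact norm_sub_le _ _
        _ ≤ _ := by linarith
  -- weak cluster points are common fixed points
  have hclus : ∀ (ψ : ℕ → ℕ), Tendsto ψ atTop atTop → ∀ p : H,
      (∀ y : H, Tendsto (fun k => ⟪seq (ψ k), y⟫) atTop (𝓝 ⟪p, y⟫)) →
      ∀ i ∈ Set.Icc 1 m, T i p = p := by
    intro ψ hψ p hweak i hi
    have hiM : ∀ k : ℕ, ∃ j, (ψ k + 1 ≤ j ∧ j < ψ k + 1 + M) ∧ h j = i := by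
      intro k
      have : i ∈ Set.range h := hh ▸ hi
      rw [← hqp (ψ k + 1)] at this
      obtain ⟨j, hj1, hj2⟩ := this
      exact ⟨j, ⟨hj1.1, hj1.2⟩, hj2⟩
    choose j hj1 hj2 using hiM
    set u : ℕ → H := fun k => seq (j k - 1) with hudef
    have hjge : ∀ k, ψ k ≤ j k - 1 := fun k => by
      have := (hj1 k).1; omega
    have hjeq : ∀ k, j k = (j k - 1) + 1 := fun k => by
      have := (hj1 k).1; omega
    have hTu : ∀ k, T i (u k) = seq (j k) := by
      intro k
      conv_rhs => rw [hjeq k]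
      rw [hsucc, ← hjeq k, hj2 k]
    have hdk : ∀ k, j k - 1 = ψ k + (j k - 1 - ψ k) := fun k => by
      have := hjge k; omega
    have hdklt : ∀ k, j k - 1 - ψ k < M := fun k => by
      have := (hj1 k).2; have := (hj1 k).1; omega
    -- ‖u k - seq (ψ k)‖ ≤ sum over window
    have hwin : ∀ k, ‖u k - seq (ψ k)‖ ≤
        ∑ t ∈ Finset.range M, ‖seq (ψ k + t) - seq (ψ k + t + 1)‖ := by
      intro k
      have h1 : ‖u k - seq (ψ k)‖ ≤
          ∑ t ∈ Finset.range (j k - 1 - ψ k), ‖seq (ψ k + t) - seq (ψ k + t + 1)‖ := by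
        have h0 := htel (ψ k) (j k - 1 - ψ k)
        rw [← hdk k] at h0
        exact h0
      refine h1.trans (Finset.sum_le_sum_of_subset_of_nonneg ?_ ?_)
      · exact Finset.range_subset_range.mpr (hdklt k).le
      · intro t _ _; exact norm_nonneg _
    have hwin0 : Tendsto (fun k => ∑ t ∈ Finset.range M,
        ‖seq (ψ k + t) - seq (ψ k + t + 1)‖) atTop (𝓝 0) := by
      have : Tendsto (fun k => ∑ t ∈ Finset.range M,
          ‖seq (ψ k + t) - seq (ψ k + t + 1)‖) atTop (𝓝 (∑ t ∈ Finset.range M, 0)) := by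
        apply tendsto_finset_sum
        intro t _
        have hψt : Tendsto (fun k => ψ k + t) atTop atTop :=
          tendsto_atTop_mono (fun k => Nat.le_add_right _ _) hψ
        exact hdiffnorm.comp hψt
      simpa using this
    have hstr : Tendsto (fun k => u k - seq (ψ k)) atTop (𝓝 0) := by
      apply tendsto_zero_iff_norm_tendsto_zero.mpr
      exact squeeze_zero (fun k => norm_nonneg _) hwin hwin0
    have huweak : ∀ y : H, Tendsto (fun k => ⟪u k, y⟫) atTop (𝓝 ⟪p, y⟫) := by
      intro y
      have h1 : Tendsto (fun k => ⟪u k - seq (ψ k), y⟫) atTop (𝓝 (0:ℝ)) := by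
        have := Tendsto.inner (𝕜 := ℝ) hstr (tendsto_const_nhds (x := y))
        simpa using this
      have := (hweak y).add h1
      simp only [add_zero] at this
      convert this using 2 with k
      rw [inner_sub_left]; ring
    have hus : Tendsto (fun k => u k - T i (u k)) atTop (𝓝 0) := by
      have hjtop : Tendsto (fun k => j k - 1) atTop atTop :=
        tendsto_atTop_mono hjge hψ
      have hcm := hdiffvec.comp hjtop
      have heq : (fun k => u k - T i (u k))
          = (fun n => seq n - seq (n + 1)) ∘ (fun k => j k - 1) := by
        funext k
        simp only [Function.comp]
        rw [hTu k, ← hjeq k]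
      rw [heq]
      exact hcm
    exact demiclosed (T i) (hT i hi).1 u p (C + ‖p‖)
      (fun k => (norm_sub_le _ _).trans (by have := hC (j k - 1); simp only [hudef]; linarith))
      huweak hus
  -- extract a weak cluster point
  obtain ⟨φ, p, hφ, hweak⟩ := exists_weak_subseq seq C hC
  have hpF : ∀ i ∈ Set.Icc 1 m, T i p = p := hclus φ hφ.tendsto_atTop p hweak
  refine ⟨p, hpF, ?_⟩
  intro y
  apply tendsto_of_subseq_tendsto
  intro ns hns
  obtain ⟨ψ, q, hψ, hqweak⟩ := exists_weak_subseq (fun k => seq (ns k)) C (fun k => hC _)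
  have hqF : ∀ i ∈ Set.Icc 1 m, T i q = q :=
    hclus (fun k => ns (ψ k)) (hns.comp hψ.tendsto_atTop) q hqweak
  -- uniqueness: q = p
  have hqp' : q = p := by
    obtain ⟨Lp, hLp⟩ := hlim p hpF
    obtain ⟨Lq, hLq⟩ := hlim q hqF
    set g : ℕ → ℝ := fun n => ‖seq n - p‖^2 - ‖seq n - q‖^2 with hgdef
    have hgl : Tendsto g atTop (𝓝 (Lp^2 - Lq^2)) := (hLp.pow 2).sub (hLq.pow 2)
    have hgexp : ∀ n, g n = -2 * ⟪seq n, p⟫ + ‖p‖^2 + 2 * ⟪seq n, q⟫ - ‖q‖^2 := by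
      intro n
      simp only [hgdef]
      rw [norm_sub_sq_real, norm_sub_sq_real]
      ring
    have h1 : Tendsto (fun k => g (φ k)) atTop
        (𝓝 (-2 * ⟪p, p⟫ + ‖p‖^2 + 2 * ⟪p, q⟫ - ‖q‖^2)) := by
      simp only [hgexp]
      have hp := (hweak p).const_mul (-2)
      have hq := (hweak q).const_mul 2
      exact ((hp.add_const (‖p‖^2)).add hq).sub_const (‖q‖^2)
    have h2 : Tendsto (fun k => g (ns (ψ k))) atTop
        (𝓝 (-2 * ⟪q, p⟫ + ‖p‖^2 + 2 * ⟪q, q⟫ - ‖q‖^2)) := by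
      simp only [hgexp]
      have hp := (hqweak p).const_mul (-2)
      have hq := (hqweak q).const_mul 2
      exact ((hp.add_const (‖p‖^2)).add hq).sub_const (‖q‖^2)
    have h1' : Lp^2 - Lq^2 = -2 * ⟪p, p⟫ + ‖p‖^2 + 2 * ⟪p, q⟫ - ‖q‖^2 :=
      tendsto_nhds_unique (hgl.comp hφ.tendsto_atTop) h1
    have h2' : Lp^2 - Lq^2 = -2 * ⟪q, p⟫ + ‖p‖^2 + 2 * ⟪q, q⟫ - ‖q‖^2 :=
      tendsto_nhds_unique (hgl.comp (hns.comp hψ.tendsto_atTop)) h2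
    have hinner : ⟪p - q, p - q⟫ = (0:ℝ) := by
      have hsym : ⟪p, q⟫ = ⟪q, p⟫ := real_inner_comm q p
      rw [inner_sub_left, inner_sub_right, inner_sub_right]
      linarith
    have : ‖p - q‖^2 = 0 := by rw [← real_inner_self_eq_norm_sq]; exact hinner
    have : p - q = 0 := by
      have := pow_eq_zero_iff (n := 2) (by norm_num) |>.mp this
      exact norm_eq_zero.mp this
    have := sub_eq_zero.mp this
    exact this.symm
  exact ⟨ψ, by rw [← hqp']; exact hqweak y⟩
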